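/- Let φ ≥ 2 be an integer and let f : {1, …, φ} → ℝ be injective with minimizer x*, and suppose f is monotone in the distance to x*, i.e. f(x) < f(y) whenever |x − x*| < |y − x*| (equivalently, f is (1, 1)-approximately unimodal). Consider the ParamHS Markov chain on {1, …, φ} induced by f, and for a starting state x₀ let T(x₀) be the hitting time of x*. Then for every x₀ ∈ {1, …, φ}, E[T(x₀)] ≤ 4·H_{φ−1}·log₂(φ) + 4·H_{φ−1} = O(log² φ). -/

import Mathlib

open MeasureTheory
open scoped Classical

/-- The `(φ−1)`-th harmonic number `H_{φ−1} = ∑_{k=1}^{φ−1} 1/k`. -/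
noncomputable def harmonicNumberPred (φ : ℕ) : ℝ :=
  ∑ k ∈ Finset.Icc 1 (φ - 1), (1 : ℝ) / (k : ℝ)

/-- The state reached by ParamHS from state `x` when the step size `d` is
sampled: the candidate set is `S = {x − d, x + d} ∩ {1, …, φ}`, `y` is the
element of `S` minimising `f`, and the chain moves to `y` iff `f y < f x`
(staying at `x` if `S` is empty). -/
noncomputable def paramHSNext (φ : ℕ) (f : ℕ → ℝ) (x d : ℕ) : ℕ :=
  if h : ∃ y ∈ ({x - d, x + d} : Finset ℕ) ∩ Finset.Icc 1 φ,
      ∀ z ∈ ({x - d, x + d} : Finset ℕ) ∩ Finset.Icc 1 φ, f y ≤ f z then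
    (if f h.choose < f x then h.choose else x)
  else x

/-- The transition probability of the ParamHS Markov chain on `{1, …, φ}`
induced by `f`: a step size `d ∈ {1, …, φ−1}` is sampled with probability
`1/(d·H_{φ−1})` and the chain moves to `paramHSNext φ f x d`. -/
noncomputable def paramHSTransProb (φ : ℕ) (f : ℕ → ℝ) (x y : ℕ) : ℝ :=
  ∑ d ∈ Finset.Icc 1 (φ - 1),
    if paramHSNext φ f x d = y then 1 / ((d : ℝ) * harmonicNumberPred φ) else 0

lemma phsDistCast (a b : ℕ) : (Nat.dist a b : ℝ) = |(a:ℝ) - b| := by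
  rcases le_total a b with h | h
  · have h1 : Nat.dist a b = b - a := by unfold Nat.dist; omega
    rw [h1, abs_sub_comm, abs_of_nonneg (sub_nonneg.2 (Nat.cast_le.2 h))]
    push_cast [h]; ring
  · have h1 : Nat.dist a b = a - b := by unfold Nat.dist; omega
    rw [h1, abs_of_nonneg (sub_nonneg.2 (Nat.cast_le.2 h))]
    push_cast [h]; ring

section Dyn
variable (φ : ℕ) (f : ℕ → ℝ) (xstar : ℕ)

lemma phsNext_mem {x : ℕ} (hx : x ∈ Finset.Icc 1 φ) (d : ℕ) :
    paramHSNext φ f x d ∈ Finset.Icc 1 φ := by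
  unfold paramHSNext
  split_ifs with h hlt
  · have hc := h.choose_spec.1
    exact (Finset.mem_inter.1 hc).2
  · exact hx
  · exact hx

lemma phsNext_star (hxs : xstar ∈ Finset.Icc 1 φ)
    (hmin : ∀ y ∈ Finset.Icc 1 φ, y ≠ xstar → f xstar < f y) (d : ℕ) :
    paramHSNext φ f xstar d = xstar := by
  unfold paramHSNext
  split_ifs with h hlt
  · exfalso
    have hc := h.choose_spec.1
    have hmem : h.choose ∈ Finset.Icc 1 φ := (Finset.mem_inter.1 hc).2
    by_cases he : h.choose = xstar
    · rw [he] at hlt; exact lt_irrefl _ hlt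
    · exact absurd hlt (not_lt.2 (le_of_lt (hmin _ hmem he)))
  · rfl
  · rfl

variable (hmono : ∀ x ∈ Finset.Icc 1 φ, ∀ y ∈ Finset.Icc 1 φ,
      |(x : ℝ) - (xstar : ℝ)| < |(y : ℝ) - (xstar : ℝ)| → f x < f y)

include hmono in
lemma phsDist_le {x : ℕ} (hx : x ∈ Finset.Icc 1 φ) (d : ℕ) :
    Nat.dist (paramHSNext φ f x d) xstar ≤ Nat.dist x xstar := by
  unfold paramHSNext
  split_ifs with h hlt
  · have hc := h.choose_spec.1
    have hmem : h.choose ∈ Finset.Icc 1 φ := (Finset.mem_inter.1 hc).2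
    by_contra hgt
    push_neg at hgt
    have : f x < f h.choose := by
      apply hmono x hx _ hmem
      rw [← phsDistCast, ← phsDistCast]
      exact_mod_cast hgt
    exact absurd hlt (not_lt.2 (le_of_lt this))
  · exact le_refl _
  · exact le_refl _

include hmono in
lemma phsDist_good (hxs : xstar ∈ Finset.Icc 1 φ) {x : ℕ} (hx : x ∈ Finset.Icc 1 φ)
    (hne : x ≠ xstar) {d : ℕ}
    (hd1 : Nat.dist x xstar - Nat.dist x xstar / 2 ≤ d) (hd2 : d ≤ Nat.dist x xstar) :
    Nat.dist (paramHSNext φ f x d) xstar ≤ Nat.dist x xstar / 2 := by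
  simp only [Finset.mem_Icc] at hx hxs
  set D := Nat.dist x xstar with hD
  have hDeq : D = x - xstar + (xstar - x) := rfl
  have hD1 : 1 ≤ D := by omega
  have hd0 : 1 ≤ d := by omega
  -- the candidate on the xstar side
  obtain ⟨y₀, hy₀mem, hy₀d⟩ : ∃ y₀, y₀ ∈ ({x - d, x + d} : Finset ℕ) ∩ Finset.Icc 1 φ ∧
      Nat.dist y₀ xstar = D - d := by
    rcases lt_or_gt_of_ne hne with hlt | hgt
    · refine ⟨x + d, ?_, ?_⟩
      · simp only [Finset.mem_inter, Finset.mem_insert, Finset.mem_singleton, Finset.mem_Icc]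
        constructor
        · right; trivial
        · omega
      · have : Nat.dist (x+d) xstar = (x+d) - xstar + (xstar - (x+d)) := rfl
        omega
    · refine ⟨x - d, ?_, ?_⟩
      · simp only [Finset.mem_inter, Finset.mem_insert, Finset.mem_singleton, Finset.mem_Icc]
        constructor
        · left; trivial
        · omega
      · have : Nat.dist (x-d) xstar = (x-d) - xstar + (xstar - (x-d)) := rfl
        omega
  have hex : ∃ y ∈ ({x - d, x + d} : Finset ℕ) ∩ Finset.Icc 1 φ,
      ∀ z ∈ ({x - d, x + d} : Finset ℕ) ∩ Finset.Icc 1 φ, f y ≤ f z :=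
    Finset.exists_min_image _ f ⟨y₀, hy₀mem⟩
  have hcmem : hex.choose ∈ Finset.Icc 1 φ := (Finset.mem_inter.1 hex.choose_spec.1).2
  have hcle : f hex.choose ≤ f y₀ := hex.choose_spec.2 y₀ hy₀mem
  have hy₀Icc : y₀ ∈ Finset.Icc 1 φ := (Finset.mem_inter.1 hy₀mem).2
  have hcdist : Nat.dist hex.choose xstar ≤ D - d := by
    by_contra hgt
    push_neg at hgt
    rw [← hy₀d] at hgt
    have : f y₀ < f hex.choose := by
      apply hmono _ hy₀Icc _ hcmem
      rw [← phsDistCast, ← phsDistCast]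
      exact_mod_cast hgt
    exact absurd hcle (not_le.2 this)
  have hflt : f hex.choose < f x := by
    apply hmono _ hcmem _ (by simp only [Finset.mem_Icc]; omega)
    rw [← phsDistCast, ← phsDistCast, ← hD]
    have : Nat.dist hex.choose xstar < D := by omega
    exact_mod_cast this
  rw [paramHSNext, dif_pos hex, if_pos hflt]
  omega

end Dyn

noncomputable def nlvl (D : ℕ) : ℕ := if D = 0 then 0 else Nat.log 2 D + 1

lemma nlvl_mono {a b : ℕ} (h : a ≤ b) : nlvl a ≤ nlvl b := by
  by_cases h1 : a = 0
  · simp [nlvl, h1]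
  · have h2 : b ≠ 0 := by omega
    simp only [nlvl, if_neg h1, if_neg h2]
    exact Nat.add_le_add_right (Nat.log_mono_right h) 1

lemma nlvl_halve {D D' : ℕ} (hD : 1 ≤ D) (h : D' ≤ D / 2) : nlvl D' + 1 ≤ nlvl D := by
  have hDne : D ≠ 0 := by omega
  by_cases h0 : D' = 0
  · simp only [nlvl, if_pos h0, if_neg hDne]; omega
  · simp only [nlvl, if_neg h0, if_neg hDne]
    have h2 : 2 * D' ≤ D := by omega
    have h3 : Nat.log 2 (2 * D') ≤ Nat.log 2 D := Nat.log_mono_right h2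
    rw [mul_comm, Nat.log_mul_base (by norm_num) h0] at h3
    omega

lemma nlvl_le {D m : ℕ} (h : D ≤ m) : nlvl D ≤ Nat.log 2 m + 1 := by
  by_cases h0 : D = 0
  · simp [nlvl, h0]
  · simp only [nlvl, if_neg h0]
    exact Nat.add_le_add_right (Nat.log_mono_right h) 1

section Trans
variable {φ : ℕ} (f : ℕ → ℝ) (xstar : ℕ)

lemma harmonic_ge_one (hφ : 2 ≤ φ) : 1 ≤ harmonicNumberPred φ := by
  have h1 : (1:ℕ) ∈ Finset.Icc 1 (φ-1) := by simp only [Finset.mem_Icc]; omega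
  have := Finset.single_le_sum (f := fun k : ℕ => (1:ℝ)/(k:ℝ))
    (fun i _ => by positivity) h1
  simpa [harmonicNumberPred] using this

lemma phsTrans_tsum (hφ : 2 ≤ φ) (x : ℕ) (g : ℕ → ENNReal) :
    ∑' y : ℕ, ENNReal.ofReal (paramHSTransProb φ f x y) * g y
      = ∑ d ∈ Finset.Icc 1 (φ-1),
          ENNReal.ofReal (1/((d:ℝ) * harmonicNumberPred φ)) * g (paramHSNext φ f x d) := by
  have hH : (0:ℝ) ≤ harmonicNumberPred φ := le_trans zero_le_one (harmonic_ge_one hφ)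
  have hstep : ∀ y : ℕ, ENNReal.ofReal (paramHSTransProb φ f x y) * g y
      = ∑ d ∈ Finset.Icc 1 (φ-1),
          (if paramHSNext φ f x d = y then
            ENNReal.ofReal (1/((d:ℝ) * harmonicNumberPred φ)) * g y else 0) := by
    intro y
    rw [paramHSTransProb, ENNReal.ofReal_sum_of_nonneg, Finset.sum_mul]
    · apply Finset.sum_congr rfl
      intro d _
      split_ifs with h
      · rfl
      · simp
    · intro d _
      split_ifs with h
      · positivity
      · exact le_refl 0
  calc ∑' y : ℕ, ENNReal.ofReal (paramHSTransProb φ f x y) * g y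
      = ∑' y : ℕ, ∑ d ∈ Finset.Icc 1 (φ-1),
          (if paramHSNext φ f x d = y then
            ENNReal.ofReal (1/((d:ℝ) * harmonicNumberPred φ)) * g y else 0) := by
        exact tsum_congr hstep
    _ = ∑ d ∈ Finset.Icc 1 (φ-1), ∑' y : ℕ,
          (if paramHSNext φ f x d = y then
            ENNReal.ofReal (1/((d:ℝ) * harmonicNumberPred φ)) * g y else 0) := by
        exact Summable.tsum_finsetSum (fun i _ => ENNReal.summable)
    _ = _ := by
        apply Finset.sum_congr rfl
        intro d _
        rw [tsum_eq_single (paramHSNext φ f x d)]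
        · rw [if_pos rfl]
        · intro y hy
          rw [if_neg (fun he => hy he.symm)]

lemma phsTrans_rowsum (hφ : 2 ≤ φ) :
    ∑ d ∈ Finset.Icc 1 (φ-1),
        ENNReal.ofReal (1/((d:ℝ) * harmonicNumberPred φ)) = 1 := by
  have hH : (1:ℝ) ≤ harmonicNumberPred φ := harmonic_ge_one hφ
  have hHne : harmonicNumberPred φ ≠ 0 := by linarith
  rw [← ENNReal.ofReal_sum_of_nonneg]
  · have : ∑ d ∈ Finset.Icc 1 (φ-1), 1/((d:ℝ) * harmonicNumberPred φ)
        = (∑ d ∈ Finset.Icc 1 (φ-1), 1/(d:ℝ)) * (harmonicNumberPred φ)⁻¹ := by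
      rw [Finset.sum_mul]
      apply Finset.sum_congr rfl
      intro d _
      rw [one_div, one_div, mul_inv]
    rw [this]
    have : (∑ d ∈ Finset.Icc 1 (φ-1), 1/(d:ℝ)) = harmonicNumberPred φ := rfl
    rw [this, mul_inv_cancel₀ hHne, ENNReal.ofReal_one]
  · intro d _
    have : (0:ℝ) ≤ (d:ℝ) := Nat.cast_nonneg d
    positivity

end Trans

section Drift
variable {φ : ℕ} {f : ℕ → ℝ} {xstar : ℕ}

lemma phs_drift (hφ : 2 ≤ φ) (hxs : xstar ∈ Finset.Icc 1 φ)
    (hmin : ∀ y ∈ Finset.Icc 1 φ, y ≠ xstar → f xstar < f y)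
    (hmono : ∀ x ∈ Finset.Icc 1 φ, ∀ y ∈ Finset.Icc 1 φ,
      |(x : ℝ) - (xstar : ℝ)| < |(y : ℝ) - (xstar : ℝ)| → f x < f y)
    {x : ℕ} (hx : x ∈ Finset.Icc 1 φ) :
    (∑' y : ℕ, ENNReal.ofReal (paramHSTransProb φ f x y)
        * (nlvl (Nat.dist y xstar) : ENNReal))
      + (if x = xstar then 0 else ENNReal.ofReal (1/(2 * harmonicNumberPred φ)))
    ≤ (nlvl (Nat.dist x xstar) : ENNReal) := by
  set H := harmonicNumberPred φ with hHdef
  have hH1 : (1:ℝ) ≤ H := harmonic_ge_one hφ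
  have hH0 : (0:ℝ) < H := by linarith
  rw [phsTrans_tsum f hφ x]
  by_cases hxx : x = xstar
  · rw [if_pos hxx, add_zero]
    have hz : ∀ d ∈ Finset.Icc 1 (φ-1),
        ENNReal.ofReal (1/((d:ℝ) * H)) * (nlvl (Nat.dist (paramHSNext φ f x d) xstar) : ENNReal) = 0 := by
      intro d _
      rw [hxx, phsNext_star φ f xstar hxs hmin d, Nat.dist_self]
      simp [nlvl]
    rw [Finset.sum_congr rfl hz, Finset.sum_const, smul_zero]
    exact zero_le
  · rw [if_neg hxx]
    set D := Nat.dist x xstar with hD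
    have hDeq : D = x - xstar + (xstar - x) := rfl
    simp only [Finset.mem_Icc] at hx hxs
    have hD1 : 1 ≤ D := by omega
    have hDφ : D ≤ φ - 1 := by omega
    set G := Finset.Icc (D - D/2) D with hG
    have hGsub : G ⊆ Finset.Icc 1 (φ-1) := by
      intro d hd
      simp only [hG, Finset.mem_Icc] at hd ⊢
      omega
    have hperd : ∀ d ∈ Finset.Icc 1 (φ-1),
        ENNReal.ofReal (1/((d:ℝ) * H)) * (nlvl (Nat.dist (paramHSNext φ f x d) xstar) : ENNReal)
          + (if d ∈ G then ENNReal.ofReal (1/((D:ℝ) * H)) else 0)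
        ≤ ENNReal.ofReal (1/((d:ℝ) * H)) * (nlvl D : ENNReal) := by
      intro d hd
      simp only [Finset.mem_Icc] at hd
      by_cases hdG : d ∈ G
      · rw [if_pos hdG]
        simp only [hG, Finset.mem_Icc] at hdG
        have hgood : Nat.dist (paramHSNext φ f x d) xstar ≤ D / 2 :=
          phsDist_good φ f xstar hmono (by simp only [Finset.mem_Icc]; omega)
            (by simp only [Finset.mem_Icc]; omega) hxx hdG.1 hdG.2
        have hlv : nlvl (Nat.dist (paramHSNext φ f x d) xstar) + 1 ≤ nlvl D :=
          nlvl_halve hD1 hgood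
        have hcc : ENNReal.ofReal (1/((D:ℝ) * H)) ≤ ENNReal.ofReal (1/((d:ℝ) * H)) := by
          apply ENNReal.ofReal_le_ofReal
          have hd0 : (0:ℝ) < (d:ℝ) := by exact_mod_cast hd.1
          apply one_div_le_one_div_of_le
          · positivity
          · apply mul_le_mul_of_nonneg_right _ (le_of_lt hH0)
            exact_mod_cast hdG.2
        calc ENNReal.ofReal (1/((d:ℝ) * H)) * (nlvl (Nat.dist (paramHSNext φ f x d) xstar) : ENNReal)
              + ENNReal.ofReal (1/((D:ℝ) * H))
            ≤ ENNReal.ofReal (1/((d:ℝ) * H)) * (nlvl (Nat.dist (paramHSNext φ f x d) xstar) : ENNReal)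
              + ENNReal.ofReal (1/((d:ℝ) * H)) := add_le_add_right hcc _
          _ = ENNReal.ofReal (1/((d:ℝ) * H))
              * ((nlvl (Nat.dist (paramHSNext φ f x d) xstar) : ENNReal) + 1) := by
              rw [mul_add, mul_one]
          _ ≤ ENNReal.ofReal (1/((d:ℝ) * H)) * (nlvl D : ENNReal) := by
              apply mul_le_mul_right
              exact_mod_cast Nat.cast_le.2 hlv
      · rw [if_neg hdG, add_zero]
        apply mul_le_mul_right
        exact Nat.cast_le.2 (nlvl_mono (phsDist_le φ f xstar hmono
          (by simp only [Finset.mem_Icc]; omega) d))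
    have hGbound : ENNReal.ofReal (1/(2 * H))
        ≤ ∑ d ∈ Finset.Icc 1 (φ-1), (if d ∈ G then ENNReal.ofReal (1/((D:ℝ) * H)) else 0) := by
      rw [Finset.sum_ite_mem, Finset.inter_eq_right.2 hGsub, Finset.sum_const, hG, Nat.card_Icc]
      have hcard : D + 1 - (D - D/2) = D/2 + 1 := by omega
      rw [hcard]
      rw [nsmul_eq_mul, ← ENNReal.ofReal_natCast, ← ENNReal.ofReal_mul (by positivity)]
      apply ENNReal.ofReal_le_ofReal
      rw [mul_one_div]
      rw [div_le_div_iff₀ (by positivity) (by positivity)]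
      have h2k : (D:ℝ) ≤ 2 * ((D/2 + 1 : ℕ):ℝ) := by
        have : D ≤ 2 * (D/2 + 1) := by omega
        exact_mod_cast this
      nlinarith
    calc (∑ d ∈ Finset.Icc 1 (φ-1), ENNReal.ofReal (1/((d:ℝ) * H))
            * (nlvl (Nat.dist (paramHSNext φ f x d) xstar) : ENNReal))
          + ENNReal.ofReal (1/(2 * H))
        ≤ (∑ d ∈ Finset.Icc 1 (φ-1), ENNReal.ofReal (1/((d:ℝ) * H))
            * (nlvl (Nat.dist (paramHSNext φ f x d) xstar) : ENNReal))
          + ∑ d ∈ Finset.Icc 1 (φ-1), (if d ∈ G then ENNReal.ofReal (1/((D:ℝ) * H)) else 0) :=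
          add_le_add_right hGbound _
      _ = ∑ d ∈ Finset.Icc 1 (φ-1), (ENNReal.ofReal (1/((d:ℝ) * H))
            * (nlvl (Nat.dist (paramHSNext φ f x d) xstar) : ENNReal)
            + (if d ∈ G then ENNReal.ofReal (1/((D:ℝ) * H)) else 0)) :=
          (Finset.sum_add_distrib).symm
      _ ≤ ∑ d ∈ Finset.Icc 1 (φ-1), ENNReal.ofReal (1/((d:ℝ) * H)) * (nlvl D : ENNReal) :=
          Finset.sum_le_sum hperd
      _ = (∑ d ∈ Finset.Icc 1 (φ-1), ENNReal.ofReal (1/((d:ℝ) * H))) * (nlvl D : ENNReal) :=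
          (Finset.sum_mul _ _ _).symm
      _ = (nlvl D : ENNReal) := by rw [phsTrans_rowsum hφ, one_mul]

end Drift


lemma ennreal_le_tsum_ite (a : ENNReal) :
    a ≤ ∑' n : ℕ, (if (n : ENNReal) < a then 1 else 0) := by
  by_cases htop : a = ⊤
  · subst htop
    have h1 : ∀ n : ℕ, (if ((n : ℕ) : ENNReal) < ⊤ then (1:ENNReal) else 0) = 1 := by
      intro n; rw [if_pos (ENNReal.natCast_lt_top n)]
    rw [tsum_congr h1, ENNReal.tsum_const_eq_top_of_ne_zero one_ne_zero]
  · obtain ⟨m, hm⟩ := ENNReal.exists_nat_gt htop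
    have hex : ∃ k : ℕ, a ≤ (k : ENNReal) := ⟨m, hm.le⟩
    set k := Nat.find hex with hk
    have hak : a ≤ (k : ENNReal) := Nat.find_spec hex
    rcases Nat.eq_zero_or_pos k with hk0 | hk0
    · rw [hk0] at hak; simp only [Nat.cast_zero] at hak
      exact le_trans hak zero_le
    · have hlt : ∀ n : ℕ, n < k → (n : ENNReal) < a := by
        intro n hn
        by_contra hle
        push_neg at hle
        exact Nat.find_min hex hn hle
      calc a ≤ (k : ENNReal) := hak
        _ = ∑ n ∈ Finset.range k, (if (n : ENNReal) < a then 1 else 0) := by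
            rw [Finset.sum_congr rfl (fun n hn => if_pos (hlt n (Finset.mem_range.1 hn)))]
            simp
        _ ≤ _ := ENNReal.sum_le_tsum _

lemma lintegral_le_tsum_gt {Ω : Type*} [MeasurableSpace Ω] (μ : Measure Ω) (T : Ω → ENNReal) :
    ∫⁻ ω, T ω ∂μ ≤ ∑' n : ℕ, μ {ω | (n : ENNReal) < T ω} := by
  rw [lintegral_def]
  apply iSup_le; intro g; apply iSup_le; intro hg
  rw [SimpleFunc.lintegral]
  have hfib : ∀ n : ℕ,
      (∑ x ∈ g.range, if (n : ENNReal) < x then μ (⇑g ⁻¹' {x}) else 0)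
        ≤ μ {ω | (n : ENNReal) < T ω} := by
    intro n
    rw [← Finset.sum_filter]
    have hdisj : Set.PairwiseDisjoint
        ((g.range.filter (fun x => (n : ENNReal) < x) : Finset ENNReal) : Set ENNReal)
        (fun x => ⇑g ⁻¹' {x}) := by
      intro x _ y _ hxy
      apply Set.disjoint_left.2
      intro ω hx hy
      exact hxy ((Set.mem_preimage.1 hx).symm.trans (Set.mem_preimage.1 hy) : x = y)
    rw [← measure_biUnion_finset hdisj (fun x _ => g.measurableSet_fiber x)]
    apply measure_mono
    intro ω hω
    simp only [Set.mem_iUnion] at hω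
    obtain ⟨x, hx, hωx⟩ := hω
    simp only [Finset.mem_filter] at hx
    have hgω : g ω = x := Set.mem_preimage.1 hωx
    have : (n : ENNReal) < g ω := hgω ▸ hx.2
    exact Set.mem_setOf_eq ▸ lt_of_lt_of_le this (hg ω)
  calc ∑ x ∈ g.range, x * μ (⇑g ⁻¹' {x})
      ≤ ∑ x ∈ g.range, (∑' n : ℕ, if (n : ENNReal) < x then 1 else 0) * μ (⇑g ⁻¹' {x}) :=
        Finset.sum_le_sum (fun x _ => mul_le_mul_left (ennreal_le_tsum_ite x) _)
    _ = ∑ x ∈ g.range, ∑' n : ℕ, (if (n : ENNReal) < x then μ (⇑g ⁻¹' {x}) else 0) := by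
        apply Finset.sum_congr rfl
        intro x _
        rw [← ENNReal.tsum_mul_right]
        apply tsum_congr
        intro n
        rw [ite_mul, one_mul, zero_mul]
    _ = ∑' n : ℕ, ∑ x ∈ g.range, (if (n : ENNReal) < x then μ (⇑g ⁻¹' {x}) else 0) :=
        (Summable.tsum_finsetSum (fun i _ => ENNReal.summable)).symm
    _ ≤ ∑' n : ℕ, μ {ω | (n : ENNReal) < T ω} := ENNReal.tsum_le_tsum hfib

section Cyl
variable {Ω : Type*} [MeasurableSpace Ω] (μ : MeasureTheory.Measure Ω) (X : ℕ → Ω → ℕ)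

def phsCyl (n : ℕ) (v : Fin (n+1) → ℕ) : Set Ω := {ω | ∀ s : Fin (n+1), X (s:ℕ) ω = v s}

variable {φ : ℕ} {f : ℕ → ℝ}

lemma phsCyl_succ
    (hmarkov : ∀ (t : ℕ) (h : ℕ → ℕ) (y : ℕ),
      μ {ω | (∀ s ≤ t, X s ω = h s) ∧ X (t + 1) ω = y}
        = ENNReal.ofReal (paramHSTransProb φ f (h t) y)
            * μ {ω | ∀ s ≤ t, X s ω = h s})
    (n : ℕ) (v : Fin (n+1) → ℕ) (y : ℕ) :
    μ (phsCyl X (n+1) (Fin.snoc v y))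
      = ENNReal.ofReal (paramHSTransProb φ f (v (Fin.last n)) y) * μ (phsCyl X n v) := by
  set h : ℕ → ℕ := fun s => if hs : s < n+1 then v ⟨s, hs⟩ else y with hh
  have e3 : h n = v (Fin.last n) := by
    simp only [hh]
    rw [dif_pos (Nat.lt_succ_self n)]
    rfl
  have e1 : {ω | ∀ s ≤ n, X s ω = h s} = phsCyl X n v := by
    ext ω
    simp only [Set.mem_setOf_eq, phsCyl]
    constructor
    · intro hω s
      have := hω s (Nat.lt_succ_iff.1 s.isLt)
      rw [hh] at this
      simp only [dif_pos s.isLt] at this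
      rwa [Fin.eta] at this
    · intro hω s hs
      have := hω ⟨s, Nat.lt_succ_of_le hs⟩
      simp only [hh, dif_pos (Nat.lt_succ_of_le hs)]
      exact this
  have e2 : {ω | (∀ s ≤ n, X s ω = h s) ∧ X (n+1) ω = y} = phsCyl X (n+1) (Fin.snoc v y) := by
    ext ω
    simp only [Set.mem_setOf_eq, phsCyl]
    constructor
    · rintro ⟨h1, h2⟩ s
      induction s using Fin.lastCases with
      | last =>
          rw [Fin.snoc_last]
          simpa using h2
      | cast i =>
          rw [Fin.snoc_castSucc]
          have := h1 i (Nat.lt_succ_iff.1 i.isLt)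
          simp only [hh, dif_pos i.isLt] at this
          rw [Fin.coe_castSucc]
          rw [this, Fin.eta]
    · intro hω
      constructor
      · intro s hs
        have := hω (Fin.castSucc ⟨s, Nat.lt_succ_of_le hs⟩)
        rw [Fin.snoc_castSucc] at this
        simp only [Fin.coe_castSucc] at this
        simp only [hh, dif_pos (Nat.lt_succ_of_le hs)]
        exact this
      · have := hω (Fin.last (n+1))
        rw [Fin.snoc_last] at this
        simpa using this
  have := hmarkov n h y
  rw [e1, e2, e3] at this
  exact this

lemma phsCyl_zero_ne {x₀ : ℕ}
    (hstart : ∀ᵐ ω ∂μ, X 0 ω = x₀) (v : Fin 1 → ℕ) (hv : v 0 ≠ x₀) :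
    μ (phsCyl X 0 v) = 0 := by
  apply measure_mono_null _ (MeasureTheory.ae_iff.1 hstart)
  intro ω hω
  have := hω 0
  simp only [Set.mem_setOf_eq]
  rw [show ((0 : Fin 1) : ℕ) = 0 from rfl] at this
  rw [this]
  exact hv

lemma phsCyl_support {xstar x₀ : ℕ} (hφ : 2 ≤ φ)
    (hxs : xstar ∈ Finset.Icc 1 φ) (hx₀ : x₀ ∈ Finset.Icc 1 φ)
    (hstart : ∀ᵐ ω ∂μ, X 0 ω = x₀)
    (hmarkov : ∀ (t : ℕ) (h : ℕ → ℕ) (y : ℕ),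
      μ {ω | (∀ s ≤ t, X s ω = h s) ∧ X (t + 1) ω = y}
        = ENNReal.ofReal (paramHSTransProb φ f (h t) y)
            * μ {ω | ∀ s ≤ t, X s ω = h s}) :
    ∀ (n : ℕ) (v : Fin (n+1) → ℕ), μ (phsCyl X n v) ≠ 0 → ∀ s, v s ∈ Finset.Icc 1 φ := by
  intro n
  induction n with
  | zero =>
      intro v hv s
      have h0 : v 0 = x₀ := by
        by_contra hne
        exact hv (phsCyl_zero_ne μ X hstart v hne)
      have : s = 0 := Fin.fin_one_eq_zero s
      rw [this, h0]
      exact hx₀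
  | succ n ih =>
      intro v hv s
      rw [← Fin.snoc_init_self v] at hv
      rw [phsCyl_succ μ X hmarkov n (Fin.init v) (v (Fin.last (n+1)))] at hv
      obtain ⟨hP, hcyl⟩ := mul_ne_zero_iff.1 hv
      have hinit := ih (Fin.init v) hcyl
      have hPne : paramHSTransProb φ f (Fin.init v (Fin.last n)) (v (Fin.last (n+1))) ≠ 0 := by
        intro h0
        rw [h0, ENNReal.ofReal_zero] at hP
        exact hP rfl
      have hlast : v (Fin.last (n+1)) ∈ Finset.Icc 1 φ := by
        obtain ⟨d, hd, hne⟩ := Finset.exists_ne_zero_of_sum_ne_zero hPne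
        by_cases hnext : paramHSNext φ f (Fin.init v (Fin.last n)) d = v (Fin.last (n+1))
        · rw [← hnext]
          exact phsNext_mem φ f (hinit (Fin.last n)) d
        · rw [if_neg hnext] at hne
          exact absurd rfl hne
      induction s using Fin.lastCases with
      | last => exact hlast
      | cast i =>
          have := hinit i
          rwa [show Fin.init v i = v (Fin.castSucc i) from rfl] at this

end Cyl

def phsSnocEquiv (n : ℕ) : ((Fin (n+1) → ℕ) × ℕ) ≃ (Fin (n+2) → ℕ) where
  toFun pz := Fin.snoc pz.1 pz.2
  invFun v := (Fin.init v, v (Fin.last (n+1)))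
  left_inv pz := by simp
  right_inv v := by simp

section Main
variable {Ω : Type*} [MeasurableSpace Ω] (μ : MeasureTheory.Measure Ω)
  [MeasureTheory.IsProbabilityMeasure μ] (X : ℕ → Ω → ℕ)
  {φ : ℕ} {f : ℕ → ℝ} {xstar x₀ : ℕ}

noncomputable def phsA (n : ℕ) : ENNReal :=
  ∑' v : Fin (n+1) → ℕ,
    μ (phsCyl X n v) * (nlvl (Nat.dist (v (Fin.last n)) xstar) : ENNReal)

noncomputable def phsB (n : ℕ) : ENNReal :=
  ∑' v : Fin (n+1) → ℕ,
    (if ∀ s, v s ≠ xstar then μ (phsCyl X n v) else 0)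

variable (hφ : 2 ≤ φ) (hxs : xstar ∈ Finset.Icc 1 φ) (hx₀ : x₀ ∈ Finset.Icc 1 φ)
  (hmin : ∀ y ∈ Finset.Icc 1 φ, y ≠ xstar → f xstar < f y)
  (hmono : ∀ x ∈ Finset.Icc 1 φ, ∀ y ∈ Finset.Icc 1 φ,
      |(x : ℝ) - (xstar : ℝ)| < |(y : ℝ) - (xstar : ℝ)| → f x < f y)
  (hstart : ∀ᵐ ω ∂μ, X 0 ω = x₀)
  (hmarkov : ∀ (t : ℕ) (h : ℕ → ℕ) (y : ℕ),
      μ {ω | (∀ s ≤ t, X s ω = h s) ∧ X (t + 1) ω = y}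
        = ENNReal.ofReal (paramHSTransProb φ f (h t) y)
            * μ {ω | ∀ s ≤ t, X s ω = h s})

include hφ hxs hx₀ hmin hmono hstart hmarkov in
lemma phs_step (n : ℕ) :
    phsA μ X (xstar := xstar) (n+1)
      + ENNReal.ofReal (1/(2 * harmonicNumberPred φ)) * phsB μ X (xstar := xstar) n
    ≤ phsA μ X (xstar := xstar) n := by
  set p := ENNReal.ofReal (1/(2 * harmonicNumberPred φ)) with hp
  have hA1 : phsA μ X (xstar := xstar) (n+1)
      = ∑' v : Fin (n+1) → ℕ, μ (phsCyl X n v)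
          * ∑' y : ℕ, ENNReal.ofReal (paramHSTransProb φ f (v (Fin.last n)) y)
              * (nlvl (Nat.dist y xstar) : ENNReal) := by
    rw [phsA, ← Equiv.tsum_eq (phsSnocEquiv n)
      (fun v' => μ (phsCyl X (n+1) v') * (nlvl (Nat.dist (v' (Fin.last (n+1))) xstar) : ENNReal))]
    rw [ENNReal.tsum_prod']
    apply tsum_congr; intro v
    rw [← ENNReal.tsum_mul_left]
    apply tsum_congr; intro y
    have h1 : (phsSnocEquiv n) (v, y) = Fin.snoc v y := rfl
    rw [h1, phsCyl_succ μ X hmarkov n v y, Fin.snoc_last]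
    ring
  have hB : p * phsB μ X (xstar := xstar) n
      = ∑' v : Fin (n+1) → ℕ, (if ∀ s, v s ≠ xstar then p * μ (phsCyl X n v) else 0) := by
    rw [phsB, ← ENNReal.tsum_mul_left]
    apply tsum_congr; intro v
    rw [mul_ite, mul_zero]
  rw [hA1, hB, ← ENNReal.tsum_add, phsA]
  apply ENNReal.tsum_le_tsum
  intro v
  by_cases hz : μ (phsCyl X n v) = 0
  · simp [hz]
  · have hIcc := phsCyl_support μ X hφ hxs hx₀ hstart hmarkov n v hz
    have hdrift := phs_drift hφ hxs hmin hmono (hIcc (Fin.last n))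
    by_cases hvb : ∀ s, v s ≠ xstar
    · rw [if_pos hvb, if_neg (hvb (Fin.last n))] at *
      calc μ (phsCyl X n v)
            * (∑' y : ℕ, ENNReal.ofReal (paramHSTransProb φ f (v (Fin.last n)) y)
                * (nlvl (Nat.dist y xstar) : ENNReal))
            + p * μ (phsCyl X n v)
          = μ (phsCyl X n v)
            * ((∑' y : ℕ, ENNReal.ofReal (paramHSTransProb φ f (v (Fin.last n)) y)
                * (nlvl (Nat.dist y xstar) : ENNReal)) + p) := by ring
        _ ≤ μ (phsCyl X n v) * (nlvl (Nat.dist (v (Fin.last n)) xstar) : ENNReal) :=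
            mul_le_mul_right hdrift _
    · rw [if_neg hvb, add_zero]
      apply mul_le_mul_right
      refine le_trans ?_ hdrift
      exact le_add_right (le_refl _)

end Main

section Main2
variable {Ω : Type*} [MeasurableSpace Ω] (μ : MeasureTheory.Measure Ω)
  [MeasureTheory.IsProbabilityMeasure μ] (X : ℕ → Ω → ℕ)
  {φ : ℕ} {f : ℕ → ℝ} {xstar x₀ : ℕ}

lemma phs_base (hstart : ∀ᵐ ω ∂μ, X 0 ω = x₀) :
    phsA μ X (xstar := xstar) 0 ≤ (nlvl (Nat.dist x₀ xstar) : ENNReal) := by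
  rw [phsA]
  have hle : ∀ v : Fin 1 → ℕ,
      μ (phsCyl X 0 v) * (nlvl (Nat.dist (v (Fin.last 0)) xstar) : ENNReal)
        ≤ (if v = (fun _ => x₀) then (nlvl (Nat.dist x₀ xstar) : ENNReal) else 0) := by
    intro v
    by_cases hv : v = (fun _ => x₀)
    · rw [if_pos hv, hv]
      calc μ (phsCyl X 0 (fun _ => x₀)) * (nlvl (Nat.dist x₀ xstar) : ENNReal)
          ≤ 1 * (nlvl (Nat.dist x₀ xstar) : ENNReal) :=
            mul_le_mul_left MeasureTheory.prob_le_one _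
        _ = _ := one_mul _
    · rw [if_neg hv]
      have hv0 : v 0 ≠ x₀ := by
        intro h0
        apply hv
        funext s
        rw [Fin.fin_one_eq_zero s, h0]
      rw [phsCyl_zero_ne μ X hstart v hv0, zero_mul]
  calc ∑' v : Fin 1 → ℕ, μ (phsCyl X 0 v) * (nlvl (Nat.dist (v (Fin.last 0)) xstar) : ENNReal)
      ≤ ∑' v : Fin 1 → ℕ, (if v = (fun _ => x₀) then (nlvl (Nat.dist x₀ xstar) : ENNReal) else 0) :=
        ENNReal.tsum_le_tsum hle
    _ = (nlvl (Nat.dist x₀ xstar) : ENNReal) := tsum_ite_eq _ _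

lemma phs_tail (n : ℕ) :
    μ {ω | (n : ENNReal) < ⨅ (t : ℕ) (_ : X t ω = xstar), (t : ENNReal)}
      ≤ phsB μ X (xstar := xstar) n := by
  have hsub : {ω | (n : ENNReal) < ⨅ (t : ℕ) (_ : X t ω = xstar), (t : ENNReal)}
      ⊆ ⋃ (v : {v : Fin (n+1) → ℕ | ∀ s, v s ≠ xstar}), phsCyl X n v.1 := by
    intro ω hω
    simp only [Set.mem_setOf_eq] at hω
    have hvs : ∀ s : Fin (n+1), X (s : ℕ) ω ≠ xstar := by
      intro s hs
      have h1 : (⨅ (t : ℕ) (_ : X t ω = xstar), (t : ENNReal)) ≤ ((s : ℕ) : ENNReal) :=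
        iInf_le_of_le (s : ℕ) (iInf_le _ hs)
      have h2 : ((s : ℕ) : ENNReal) ≤ (n : ENNReal) := by
        exact_mod_cast Nat.cast_le.2 (Nat.lt_succ_iff.1 s.isLt)
      exact absurd (lt_of_lt_of_le hω (le_trans h1 h2)) (lt_irrefl _)
    refine Set.mem_iUnion.2 ⟨⟨fun s => X (s : ℕ) ω, hvs⟩, ?_⟩
    intro s
    rfl
  calc μ {ω | (n : ENNReal) < ⨅ (t : ℕ) (_ : X t ω = xstar), (t : ENNReal)}
      ≤ μ (⋃ (v : {v : Fin (n+1) → ℕ | ∀ s, v s ≠ xstar}), phsCyl X n v.1) :=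
        measure_mono hsub
    _ ≤ ∑' (v : {v : Fin (n+1) → ℕ | ∀ s, v s ≠ xstar}), μ (phsCyl X n v.1) :=
        measure_iUnion_le _
    _ = ∑' (v : {v : Fin (n+1) → ℕ | ∀ s, v s ≠ xstar}),
          (fun v : Fin (n+1) → ℕ => μ (phsCyl X n v)) ↑v := rfl
    _ = ∑' (v : Fin (n+1) → ℕ),
          Set.indicator {v : Fin (n+1) → ℕ | ∀ s, v s ≠ xstar}
            (fun v => μ (phsCyl X n v)) v :=
        by
          exact tsum_subtype {v : Fin (n+1) → ℕ | ∀ s, v s ≠ xstar}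
            (fun v => μ (phsCyl X n v))
    _ = phsB μ X (xstar := xstar) n := by
        rw [phsB]
        apply tsum_congr
        intro v
        rw [Set.indicator_apply]
        rfl

end Main2


/-- Corollary (a) to Theorem 4.  Let `f : {1, …, φ} → ℝ` (with
`φ ≥ 2`) be injective with minimizer `xstar` and monotone in the distance to
`xstar` (i.e. `f x < f y` whenever `|x − xstar| < |y − xstar|`; equivalently `f`
is `(1, 1)`-approximately unimodal).  For any Markov chain `(X_t)` with the
ParamHS transition probabilities started at `X_0 = x₀ ∈ {1, …, φ}`, the expected
hitting time of `xstar` is at most `4·H_{φ−1}·log₂ φ + 4·H_{φ−1} = O(log² φ)`. -/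
theorem paramHS_hitting_time_unimodal
    {Ω : Type*} [MeasurableSpace Ω] (μ : Measure Ω) [IsProbabilityMeasure μ]
    (φ : ℕ) (hφ : 2 ≤ φ) (f : ℕ → ℝ) (hf : Set.InjOn f (Set.Icc 1 φ))
    (xstar : ℕ) (hxs : xstar ∈ Finset.Icc 1 φ)
    (hmin : ∀ y ∈ Finset.Icc 1 φ, y ≠ xstar → f xstar < f y)
    (hmono : ∀ x ∈ Finset.Icc 1 φ, ∀ y ∈ Finset.Icc 1 φ,
      |(x : ℝ) - (xstar : ℝ)| < |(y : ℝ) - (xstar : ℝ)| → f x < f y)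
    (x₀ : ℕ) (hx₀ : x₀ ∈ Finset.Icc 1 φ)
    (X : ℕ → Ω → ℕ)
    (hstart : ∀ᵐ ω ∂μ, X 0 ω = x₀)
    (hmarkov : ∀ (t : ℕ) (h : ℕ → ℕ) (y : ℕ),
      μ {ω | (∀ s ≤ t, X s ω = h s) ∧ X (t + 1) ω = y}
        = ENNReal.ofReal (paramHSTransProb φ f (h t) y)
            * μ {ω | ∀ s ≤ t, X s ω = h s}) :
    ∫⁻ ω, (⨅ (t : ℕ) (_ : X t ω = xstar), (t : ENNReal)) ∂μ
      ≤ ENNReal.ofReal (4 * harmonicNumberPred φ * Real.logb 2 (φ : ℝ)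
          + 4 * harmonicNumberPred φ) := by
  have hH1 : (1:ℝ) ≤ harmonicNumberPred φ := harmonic_ge_one hφ
  have hH0 : (0:ℝ) < harmonicNumberPred φ := lt_of_lt_of_le one_pos hH1
  set H := harmonicNumberPred φ with hHdef
  set p := ENNReal.ofReal (1/(2*H)) with hp
  have hp0 : p ≠ 0 := by
    rw [hp]
    exact (ENNReal.ofReal_pos.2 (by positivity)).ne'
  have hptop : p ≠ ⊤ := ENNReal.ofReal_ne_top
  set L := (nlvl (Nat.dist x₀ xstar) : ENNReal) with hL
  have htel : ∀ N : ℕ, phsA μ X (xstar := xstar) N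
      + p * ∑ n ∈ Finset.range N, phsB μ X (xstar := xstar) n
      ≤ phsA μ X (xstar := xstar) 0 := by
    intro N
    induction N with
    | zero => simp
    | succ N ih =>
        rw [Finset.sum_range_succ, mul_add]
        calc phsA μ X (xstar := xstar) (N+1)
              + (p * ∑ n ∈ Finset.range N, phsB μ X (xstar := xstar) n
                 + p * phsB μ X (xstar := xstar) N)
            = (phsA μ X (xstar := xstar) (N+1) + p * phsB μ X (xstar := xstar) N)
              + p * ∑ n ∈ Finset.range N, phsB μ X (xstar := xstar) n := by ring
          _ ≤ phsA μ X (xstar := xstar) N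
              + p * ∑ n ∈ Finset.range N, phsB μ X (xstar := xstar) n :=
            add_le_add_left (phs_step μ X hφ hxs hx₀ hmin hmono hstart hmarkov N) _
          _ ≤ phsA μ X (xstar := xstar) 0 := ih
  have hA0 : phsA μ X (xstar := xstar) 0 ≤ L := phs_base μ X hstart
  have hsum : ∀ N : ℕ, (∑ n ∈ Finset.range N, phsB μ X (xstar := xstar) n) * p ≤ L := by
    intro N
    rw [mul_comm]
    calc p * ∑ n ∈ Finset.range N, phsB μ X (xstar := xstar) n
        ≤ phsA μ X (xstar := xstar) N
          + p * ∑ n ∈ Finset.range N, phsB μ X (xstar := xstar) n := le_add_self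
      _ ≤ phsA μ X (xstar := xstar) 0 := htel N
      _ ≤ L := hA0
  have htsum : ∑' n : ℕ, phsB μ X (xstar := xstar) n ≤ L / p :=
    Summable.tsum_le_of_sum_range_le ENNReal.summable
      (fun N => (ENNReal.le_div_iff_mul_le (Or.inl hp0) (Or.inl hptop)).2 (hsum N))
  have hdiv : L / p = L * ENNReal.ofReal (2*H) := by
    rw [div_eq_mul_inv, hp, ← ENNReal.ofReal_inv_of_pos (by positivity), one_div, inv_inv]
  have hfinal : L * ENNReal.ofReal (2*H)
      ≤ ENNReal.ofReal (4 * H * Real.logb 2 (φ : ℝ) + 4 * H) := by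
    have hDle : Nat.dist x₀ xstar ≤ φ - 1 := by
      have h1 : Nat.dist x₀ xstar = x₀ - xstar + (xstar - x₀) := rfl
      simp only [Finset.mem_Icc] at hx₀ hxs
      omega
    have hnl : nlvl (Nat.dist x₀ xstar) ≤ Nat.log 2 (φ-1) + 1 := nlvl_le hDle
    calc L * ENNReal.ofReal (2*H)
        ≤ ((Nat.log 2 (φ-1) + 1 : ℕ) : ENNReal) * ENNReal.ofReal (2*H) :=
          mul_le_mul_left (Nat.cast_le.2 hnl) _
      _ = ENNReal.ofReal (((Nat.log 2 (φ-1) + 1 : ℕ) : ℝ) * (2*H)) := by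
          rw [← ENNReal.ofReal_natCast, ← ENNReal.ofReal_mul (Nat.cast_nonneg _)]
      _ ≤ ENNReal.ofReal (4 * H * Real.logb 2 (φ : ℝ) + 4 * H) := by
          apply ENNReal.ofReal_le_ofReal
          have hml : ((Nat.log 2 (φ-1) : ℕ) : ℝ) ≤ Real.logb 2 ((φ-1 : ℕ) : ℝ) :=
            Real.natLog_le_logb (φ-1) 2
          have hcast : ((φ-1 : ℕ) : ℝ) ≤ (φ : ℝ) := by
            have : φ - 1 ≤ φ := Nat.sub_le φ 1
            exact_mod_cast this
          have hpos : (0:ℝ) < ((φ-1 : ℕ) : ℝ) := by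
            have : 1 ≤ φ - 1 := by omega
            exact_mod_cast lt_of_lt_of_le one_pos (by exact_mod_cast this)
          have hlog2 : Real.logb 2 ((φ-1 : ℕ) : ℝ) ≤ Real.logb 2 (φ : ℝ) :=
            Real.logb_le_logb_of_le (by norm_num) hpos hcast
          have hlogb0 : 0 ≤ Real.logb 2 (φ : ℝ) :=
            Real.logb_nonneg (by norm_num) (by exact_mod_cast le_trans one_le_two hφ)
          have hm : ((Nat.log 2 (φ-1) : ℕ) : ℝ) ≤ Real.logb 2 (φ : ℝ) := le_trans hml hlog2
          push_cast
          nlinarith [mul_le_mul_of_nonneg_left hm (by linarith : (0:ℝ) ≤ 2*H)]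
  calc ∫⁻ ω, (⨅ (t : ℕ) (_ : X t ω = xstar), (t : ENNReal)) ∂μ
      ≤ ∑' n : ℕ, μ {ω | (n : ENNReal) < ⨅ (t : ℕ) (_ : X t ω = xstar), (t : ENNReal)} :=
        lintegral_le_tsum_gt μ _
    _ ≤ ∑' n : ℕ, phsB μ X (xstar := xstar) n :=
        ENNReal.tsum_le_tsum (fun n => phs_tail μ X n)
    _ ≤ L / p := htsum
    _ = L * ENNReal.ofReal (2*H) := hdiv
    _ ≤ _ := hfinal
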